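/- Suppose the training set {y_1,…,y_m} has been cycled through in exactly T complete epochs, and for each k let I_k ≤ T be the number of margin-error updates made on pattern y_k, with M = Σ_k I_k the total number of margin errors. Set C = 1/(λm), α_k = C·I_k/T, and w^T = Σ_k α_k y_k. Then 0 ≤ α_k ≤ C for all k, and min_w J(w) ≥ C·M/T − (1/2)‖w^T‖², where J(w) = (1/2)‖w‖² + C Σ_k max{0, 1 − w·y_k}. -/

import Mathlib

theorem l1svm_lower_bound_after_epochs
    (d m T : ℕ) (hm : 1 ≤ m) (hT : 1 ≤ T)
    (lam : ℝ) (hlam : 0 < lam)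
    (y : Fin m → EuclideanSpace ℝ (Fin d))
    (I : Fin m → ℕ) (hI : ∀ k, I k ≤ T)
    (C : ℝ) (hC : C = 1/(lam * (m : ℝ)))
    (α : Fin m → ℝ) (hα : ∀ k, α k = C * (I k : ℝ)/(T : ℝ))
    (wT : EuclideanSpace ℝ (Fin d)) (hwT : wT = ∑ k, α k • y k)
    (M : ℕ) (hM : M = ∑ k, I k) :
    (∀ k, 0 ≤ α k ∧ α k ≤ C) ∧
    ∀ w : EuclideanSpace ℝ (Fin d),
      (1/2) * ‖w‖^2 + C * ∑ k, max 0 (1 - (inner ℝ w (y k) : ℝ)) ≥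
        C * (M : ℝ)/(T : ℝ) - (1/2) * ‖wT‖^2 := by
  have hm' : (0:ℝ) < m := by exact_mod_cast hm
  have hT' : (0:ℝ) < T := by exact_mod_cast hT
  have hC0 : 0 ≤ C := by
    rw [hC]; positivity
  have hbounds : ∀ k, 0 ≤ α k ∧ α k ≤ C := by
    intro k
    have hIk : (I k : ℝ) ≤ (T : ℝ) := by exact_mod_cast hI k
    have hIk0 : (0:ℝ) ≤ (I k : ℝ) := Nat.cast_nonneg _
    rw [hα k]
    constructor
    · positivity
    · rw [div_le_iff₀ hT']
      nlinarith
  refine ⟨hbounds, fun w => ?_⟩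
  have hS : ∑ k, α k = C * (M : ℝ)/(T : ℝ) := by
    have : ∑ k, α k = ∑ k, C * (I k : ℝ)/(T : ℝ) := by
      exact Finset.sum_congr rfl fun k _ => hα k
    rw [this, hM]
    push_cast
    rw [Finset.mul_sum, Finset.sum_div]
  have hinner : (inner ℝ w wT : ℝ) = ∑ k, α k * (inner ℝ w (y k) : ℝ) := by
    rw [hwT, inner_sum]
    exact Finset.sum_congr rfl fun k _ => real_inner_smul_right _ _ _
  have hkey : ∀ k, α k * (1 - (inner ℝ w (y k) : ℝ)) ≤ C * max 0 (1 - (inner ℝ w (y k) : ℝ)) := by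
    intro k
    obtain ⟨h0, h1⟩ := hbounds k
    rcases le_or_gt (1 - (inner ℝ w (y k) : ℝ)) 0 with h | h
    · calc α k * (1 - (inner ℝ w (y k) : ℝ)) ≤ 0 := mul_nonpos_of_nonneg_of_nonpos h0 h
        _ ≤ C * max 0 (1 - (inner ℝ w (y k) : ℝ)) :=
          mul_nonneg hC0 (le_max_left _ _)
    · rw [max_eq_right h.le]
      exact mul_le_mul_of_nonneg_right h1 h.le
  have hsum : ∑ k, α k * (1 - (inner ℝ w (y k) : ℝ)) ≤
      C * ∑ k, max 0 (1 - (inner ℝ w (y k) : ℝ)) := by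
    rw [Finset.mul_sum]
    exact Finset.sum_le_sum fun k _ => hkey k
  have hsum' : ∑ k, α k * (1 - (inner ℝ w (y k) : ℝ)) =
      (∑ k, α k) - (inner ℝ w wT : ℝ) := by
    rw [hinner, ← Finset.sum_sub_distrib]
    exact Finset.sum_congr rfl fun k _ => by ring
  have hip : (inner ℝ w wT : ℝ) ≤ (1/2) * ‖w‖^2 + (1/2) * ‖wT‖^2 := by
    have h := real_inner_le_norm w wT
    nlinarith [norm_nonneg w, norm_nonneg wT, sq_nonneg (‖w‖ - ‖wT‖)]
  rw [hsum'] at hsum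
  rw [hS] at hsum
  linarith
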